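/- arXiv:2007.04888 — 2 statements merged into one kernel-verified Lean document; each statement's English description precedes it below -/
import Mathlib

section
/- (Lemma 'tsr help', the key combinatorial lemma of the paper.) Let A and Z be seminormal crystals, let u ∈ A, z ∈ Z, and let j_1, …, j_m ∈ I. Suppose that F_{j_1}⋯F_{j_m}({u ⊗ z}) ⊆ {u} ⊗ Z inside the tensor product crystal A ⊗ Z (i.e., every element of this set has first tensor factor equal to u). Then for all d_1, …, d_m ∈ ℤ_{≥0}, the monomial G = f_{j_1}^{d_1} ⋯ f_{j_m}^{d_m} satisfies G(u ⊗ z) = u ⊗ G(z) in (A ⊗ Z) ⊔ {0}, with the convention u ⊗ 0 := 0. -/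
/-!
Common setup: seminormal crystals over an index type `I` and a weight group `P`,
with simple roots `α : I → P` and coroot pairings `pair : I → P →+ ℤ`.
We model `B ⊔ {0}` as `Option B` with `0 = none`.
-/

/-- Iterate a partial map `g : B → Option B` (extended by `0 ↦ 0`) `n` times. -/
def optIter {B : Type*} (g : B → Option B) : ℕ → Option B → Option B
  | 0, x => x
  | n + 1, x => (optIter g n x).bind g

/-- A seminormal crystal: a set `B` with weight map `wt : B → P` and partial
crystal operators `e i, f i : B → Option B` (with the convention `0 ↦ 0`),
together with the (finite) string lengths `eps` and `phi`, satisfying the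
seminormal crystal axioms. -/
structure SNCrystal (I : Type*) (P : Type*) [AddCommGroup P]
    (α : I → P) (pair : I → P →+ ℤ) (B : Type*) where
  wt : B → P
  e : I → B → Option B
  f : I → B → Option B
  /-- `eps i b = max {k ≥ 0 ∣ e_i^k b ≠ 0}` (finiteness is the existence of this field). -/
  eps : I → B → ℕ
  /-- `phi i b = max {k ≥ 0 ∣ f_i^k b ≠ 0}` (finiteness is the existence of this field). -/
  phi : I → B → ℕ
  wt_e : ∀ i b b', e i b = some b' → wt b' = wt b + α i
  wt_f : ∀ i b b', f i b = some b' → wt b' = wt b - α i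
  eps_spec : ∀ i b, optIter (e i) (eps i b) (some b) ≠ none
  eps_max : ∀ i b, optIter (e i) (eps i b + 1) (some b) = none
  phi_spec : ∀ i b, optIter (f i) (phi i b) (some b) ≠ none
  phi_max : ∀ i b, optIter (f i) (phi i b + 1) (some b) = none
  pair_wt : ∀ i b, pair i (wt b) = (phi i b : ℤ) - (eps i b : ℤ)
  f_e : ∀ i b b', e i b = some b' → f i b' = some b
  e_f : ∀ i b b', f i b = some b' → e i b' = some b

/-- The raising operator of the tensor product crystal `B₁ ⊗ B₂`:
`e_i(b₁ ⊗ b₂) = e_i b₁ ⊗ b₂` if `φ_i(b₁) ≥ ε_i(b₂)`, else `b₁ ⊗ e_i b₂`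
(with `0 ⊗ b₂ = b₁ ⊗ 0 = 0`). -/
def tensorE {I P : Type*} [AddCommGroup P] {α : I → P} {pair : I → P →+ ℤ}
    {B1 B2 : Type*} (C1 : SNCrystal I P α pair B1) (C2 : SNCrystal I P α pair B2)
    (i : I) (b : B1 × B2) : Option (B1 × B2) :=
  if C2.eps i b.2 ≤ C1.phi i b.1 then (C1.e i b.1).map (fun x => (x, b.2))
  else (C2.e i b.2).map (fun x => (b.1, x))

/-- The lowering operator of the tensor product crystal `B₁ ⊗ B₂`:
`f_i(b₁ ⊗ b₂) = f_i b₁ ⊗ b₂` if `φ_i(b₁) > ε_i(b₂)`, else `b₁ ⊗ f_i b₂`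
(with `0 ⊗ b₂ = b₁ ⊗ 0 = 0`). -/
def tensorF {I P : Type*} [AddCommGroup P] {α : I → P} {pair : I → P →+ ℤ}
    {B1 B2 : Type*} (C1 : SNCrystal I P α pair B1) (C2 : SNCrystal I P α pair B2)
    (i : I) (b : B1 × B2) : Option (B1 × B2) :=
  if C2.eps i b.2 < C1.phi i b.1 then (C1.f i b.1).map (fun x => (x, b.2))
  else (C2.f i b.2).map (fun x => (b.1, x))

/-- `T` is the tensor product crystal `C1 ⊗ C2` on the set `B1 × B2`:
its weight map and crystal operators are given by the tensor product rule. -/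
def IsTensor {I P : Type*} [AddCommGroup P] {α : I → P} {pair : I → P →+ ℤ}
    {B1 B2 : Type*} (C1 : SNCrystal I P α pair B1) (C2 : SNCrystal I P α pair B2)
    (T : SNCrystal I P α pair (B1 × B2)) : Prop :=
  (∀ b : B1 × B2, T.wt b = C1.wt b.1 + C2.wt b.2) ∧
  (∀ (i : I) (b : B1 × B2), T.e i b = tensorE C1 C2 i b) ∧
  (∀ (i : I) (b : B1 × B2), T.f i b = tensorF C1 C2 i b)

/-- `F_i S = {f_i^k b ∣ b ∈ S, k ≥ 0} \ {0}`. -/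
def Fset {I P : Type*} [AddCommGroup P] {α : I → P} {pair : I → P →+ ℤ}
    {B : Type*} (C : SNCrystal I P α pair B) (i : I) (S : Set B) : Set B :=
  {b | ∃ s ∈ S, ∃ k : ℕ, optIter (C.f i) k (some s) = some b}

/-- `F_{j₁} ⋯ F_{j_m} S` for a word `[j₁, …, j_m]` (the rightmost letter acts first). -/
def Fword {I P : Type*} [AddCommGroup P] {α : I → P} {pair : I → P →+ ℤ}
    {B : Type*} (C : SNCrystal I P α pair B) (w : List I) (S : Set B) : Set B :=
  w.foldr (Fset C) S

/-- The monomial `f_{j₁}^{d₁} ⋯ f_{j_m}^{d_m}` applied to an element of `B ⊔ {0}`,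
given the list of pairs `[(j₁,d₁), …, (j_m,d_m)]` (the rightmost factor acts first). -/
def monomial {I P : Type*} [AddCommGroup P] {α : I → P} {pair : I → P →+ ℤ}
    {B : Type*} (C : SNCrystal I P α pair B) : List (I × ℕ) → Option B → Option B
  | [], x => x
  | p :: rest, x => optIter (C.f p.1) p.2 (monomial C rest x)

lemma optIter_none {B : Type*} (g : B → Option B) (n : ℕ) :
    optIter g n none = none := by
  induction n with
  | zero => rfl
  | succ n ih => rw [optIter, ih]; rfl

lemma optIter_fixed {B : Type*} (g : B → Option B) (b : B) (h : g b = some b)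
    (n : ℕ) : optIter g n (some b) = some b := by
  induction n with
  | zero => rfl
  | succ n ih => rw [optIter, ih, Option.bind_some, h]

lemma optIter_none_of_none {B : Type*} (g : B → Option B) (b : B) (h : g b = none)
    (n : ℕ) : optIter g (n + 1) (some b) = none := by
  induction n with
  | zero => rw [optIter]; simp [optIter, h]
  | succ n ih => rw [optIter, ih]; rfl

lemma no_f_fix {I P : Type*} [AddCommGroup P] {α : I → P} {pair : I → P →+ ℤ}
    {B : Type*} (C : SNCrystal I P α pair B) (i : I) (b : B)
    (h : C.f i b = some b) : False := by
  have := C.phi_max i b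
  rw [optIter_fixed _ _ h] at this
  exact Option.some_ne_none _ this

lemma phi_zero {I P : Type*} [AddCommGroup P] {α : I → P} {pair : I → P →+ ℤ}
    {B : Type*} (C : SNCrystal I P α pair B) (i : I) (b : B)
    (h : C.f i b = none) : C.phi i b = 0 := by
  by_contra hne
  obtain ⟨k, hk⟩ := Nat.exists_eq_succ_of_ne_zero hne
  have := C.phi_spec i b
  rw [hk, optIter_none_of_none _ _ h] at this
  exact this rfl

/-- Single-step lemma: if the whole `f_j`-string from `(u,y)` stays in `{u} × Z`,
then `f_j^d (u ⊗ y) = u ⊗ f_j^d y`. -/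
lemma tsr_step {I P : Type*} [AddCommGroup P] {α : I → P} {pair : I → P →+ ℤ}
    {A Z : Type*} (CA : SNCrystal I P α pair A) (CZ : SNCrystal I P α pair Z)
    (T : SNCrystal I P α pair (A × Z)) (hT : IsTensor CA CZ T)
    (j : I) (u : A) (y : Z)
    (h : ∀ (k : ℕ) (p : A × Z), optIter (T.f j) k (some (u, y)) = some p → p.1 = u)
    (d : ℕ) :
    optIter (T.f j) d (some (u, y)) =
      (optIter (CZ.f j) d (some y)).map (fun x => (u, x)) := by
  induction d with
  | zero => rfl
  | succ d ih =>
    rw [optIter, optIter, ih]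
    cases h2 : optIter (CZ.f j) d (some y) with
    | none => simp
    | some y' =>
      simp only [Option.map_some, Option.bind_some]
      have key : T.f j (u, y') = (CZ.f j y').map (fun x => (u, x)) := by
        rw [hT.2.2, tensorF]
        by_cases hlt : CZ.eps j y' < CA.phi j u
        · exfalso
          cases h3 : CA.f j u with
          | none =>
            rw [phi_zero CA j u h3] at hlt
            exact Nat.not_lt_zero _ hlt
          | some a =>
            have hstep : optIter (T.f j) (d + 1) (some (u, y)) = some (a, y') := by
              rw [optIter, ih, h2, Option.map_some, Option.bind_some,
                hT.2.2, tensorF, if_pos hlt, h3]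
              rfl
            have ha : a = u := h (d + 1) (a, y') hstep
            rw [ha] at h3
            exact no_f_fix CA j u h3
        · rw [if_neg hlt]
      rw [key]

/-- Lemma "tsr help". Let `A`, `Z` be seminormal crystals, `u ∈ A`,
`z ∈ Z`, and `j₁, …, j_m ∈ I`. If `F_{j₁}⋯F_{j_m}({u ⊗ z}) ⊆ {u} ⊗ Z` in `A ⊗ Z`,
then for all `d₁, …, d_m ≥ 0`, the monomial `G = f_{j₁}^{d₁}⋯f_{j_m}^{d_m}` satisfies
`G(u ⊗ z) = u ⊗ G(z)` (with the convention `u ⊗ 0 = 0`). -/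
theorem tsr_help {I P : Type*} [AddCommGroup P] {α : I → P} {pair : I → P →+ ℤ}
    {A Z : Type*} (CA : SNCrystal I P α pair A) (CZ : SNCrystal I P α pair Z)
    (T : SNCrystal I P α pair (A × Z)) (hT : IsTensor CA CZ T)
    (u : A) (z : Z) (js : List I)
    (hF : Fword T js {(u, z)} ⊆ {p : A × Z | p.1 = u}) :
    ∀ ds : List ℕ, ds.length = js.length →
      monomial T (js.zip ds) (some (u, z)) =
        (monomial CZ (js.zip ds) (some z)).map (fun y => (u, y)) := by
  suffices h : ∀ js' : List I, (Fword T js' {(u, z)} ⊆ {p : A × Z | p.1 = u}) →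
      ∀ ds : List ℕ, ds.length = js'.length →
        monomial T (js'.zip ds) (some (u, z)) =
          (monomial CZ (js'.zip ds) (some z)).map (fun y => (u, y)) ∧
        ∀ p, monomial T (js'.zip ds) (some (u, z)) = some p → p ∈ Fword T js' {(u, z)} by
    intro ds hlen
    exact (h js hF ds hlen).1
  clear hF
  intro js
  induction js with
  | nil =>
    intro _ ds _
    refine ⟨rfl, ?_⟩
    intro p hp
    have : (u, z) = p := Option.some.inj hp
    exact this ▸ rfl
  | cons j js' ih =>
    intro hF ds hlen
    cases ds with
    | nil => simp at hlen
    | cons d ds' =>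
      have hsub : Fword T js' {(u, z)} ⊆ Fword T (j :: js') {(u, z)} := by
        intro p hp
        exact ⟨p, hp, 0, rfl⟩
      obtain ⟨hmon, hmem⟩ := ih (Set.Subset.trans hsub hF) ds' (by simpa using hlen)
      have hzip : (j :: js').zip (d :: ds') = (j, d) :: js'.zip ds' := rfl
      rw [hzip]
      simp only [monomial]
      constructor
      · rw [hmon]
        cases h2 : monomial CZ (js'.zip ds') (some z) with
        | none => simp [optIter_none]
        | some y =>
          have hy : (u, y) ∈ Fword T js' {(u, z)} := hmem (u, y) (by rw [hmon, h2]; rfl)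
          have hstr : ∀ (k : ℕ) (p : A × Z),
              optIter (T.f j) k (some (u, y)) = some p → p.1 = u := by
            intro k p hk
            exact hF ⟨(u, y), hy, k, hk⟩
          simp only [Option.map_some]
          exact tsr_step CA CZ T hT j u y hstr d
      · intro p hp
        cases h2 : monomial T (js'.zip ds') (some (u, z)) with
        | none =>
          rw [h2, optIter_none] at hp
          exact absurd hp (by simp)
        | some q =>
          rw [h2] at hp
          exact ⟨q, hmem q h2, d, hp⟩
end

section
/- (The tensor product rule defines a seminormal crystal.) Let B_1 and B_2 be seminormal crystals. Then the set B_1 × B_2 equipped with wt(b_1 ⊗ b_2) = wt(b_1) + wt(b_2) and the tensor product operators e_i, f_i defined by the signature rule is again a seminormal crystal; that is, it satisfies all the crystal axioms: the weight changes by ±α_i under e_i and f_i when the result is nonzero, ε_i and φ_i are finite on B_1 ⊗ B_2, ⟨α_i^∨, wt(b_1) + wt(b_2)⟩ = φ_i(b_1 ⊗ b_2) − ε_i(b_1 ⊗ b_2), and e_i and f_i are mutually inverse where nonzero. -/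
section Aux

theorem optIter_succ' {B : Type*} (g : B → Option B) (n : ℕ) (x : Option B) :
    optIter g (n+1) x = optIter g n (x.bind g) := by
  induction n generalizing x with
  | zero => rfl
  | succ n ih => show (optIter g (n+1) x).bind g = _; rw [ih]; rfl

theorem optIter_none_stable {B : Type*} (g : B → Option B) {n m : ℕ} {x : Option B}
    (h : optIter g n x = none) (hm : n ≤ m) : optIter g m x = none := by
  obtain ⟨k, rfl⟩ := Nat.exists_eq_add_of_le hm
  induction k with
  | zero => exact h
  | succ k ih => show (optIter g (n+k) x).bind g = none; rw [ih (by omega)]; rfl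

theorem len_unique {B : Type*} (g : B → Option B) {x : Option B} {k k' : ℕ}
    (h1 : optIter g k x ≠ none) (h2 : optIter g (k+1) x = none)
    (h1' : optIter g k' x ≠ none) (h2' : optIter g (k'+1) x = none) : k = k' := by
  rcases lt_trichotomy k k' with h | h | h
  · exact absurd (optIter_none_stable g h2 (by omega)) h1'
  · exact h
  · exact absurd (optIter_none_stable g h2' (by omega)) h1

variable {I P : Type*} [AddCommGroup P] {α : I → P} {pair : I → P →+ ℤ}
  {B : Type*} (C : SNCrystal I P α pair B)

theorem SNCrystal.eps_eq {i : I} {b : B} {k : ℕ}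
    (h1 : optIter (C.e i) k (some b) ≠ none)
    (h2 : optIter (C.e i) (k+1) (some b) = none) : C.eps i b = k :=
  len_unique _ (C.eps_spec i b) (C.eps_max i b) h1 h2

theorem SNCrystal.phi_eq {i : I} {b : B} {k : ℕ}
    (h1 : optIter (C.f i) k (some b) ≠ none)
    (h2 : optIter (C.f i) (k+1) (some b) = none) : C.phi i b = k :=
  len_unique _ (C.phi_spec i b) (C.phi_max i b) h1 h2

theorem SNCrystal.eps_zero_of_e_none {i : I} {b : B} (h : C.e i b = none) :
    C.eps i b = 0 :=
  C.eps_eq (by simp [optIter]) (by simpa [optIter] using h)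

theorem SNCrystal.e_none_of_eps_zero {i : I} {b : B} (h : C.eps i b = 0) :
    C.e i b = none := by
  have := C.eps_max i b
  rw [h] at this
  simpa [optIter] using this

theorem SNCrystal.phi_zero_of_f_none {i : I} {b : B} (h : C.f i b = none) :
    C.phi i b = 0 :=
  C.phi_eq (by simp [optIter]) (by simpa [optIter] using h)

theorem SNCrystal.f_none_of_phi_zero {i : I} {b : B} (h : C.phi i b = 0) :
    C.f i b = none := by
  have := C.phi_max i b
  rw [h] at this
  simpa [optIter] using this

theorem SNCrystal.eps_of_e {i : I} {b b' : B} (h : C.e i b = some b') :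
    C.eps i b = C.eps i b' + 1 := by
  have key : ∀ k, optIter (C.e i) (k+1) (some b) = optIter (C.e i) k (some b') := by
    intro k; rw [optIter_succ']; simp [h]
  exact C.eps_eq (by rw [key]; exact C.eps_spec i b') (by rw [key]; exact C.eps_max i b')

theorem SNCrystal.phi_of_f {i : I} {b b' : B} (h : C.f i b = some b') :
    C.phi i b = C.phi i b' + 1 := by
  have key : ∀ k, optIter (C.f i) (k+1) (some b) = optIter (C.f i) k (some b') := by
    intro k; rw [optIter_succ']; simp [h]
  exact C.phi_eq (by rw [key]; exact C.phi_spec i b') (by rw [key]; exact C.phi_max i b')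

theorem SNCrystal.phi_of_e {i : I} {b b' : B} (h : C.e i b = some b') :
    C.phi i b' = C.phi i b + 1 :=
  C.phi_of_f (C.f_e i b b' h)

theorem SNCrystal.eps_of_f {i : I} {b b' : B} (h : C.f i b = some b') :
    C.eps i b' = C.eps i b + 1 :=
  C.eps_of_e (C.e_f i b b' h)

/-- If a measure drops by exactly 1 along `g` and `g` is defined exactly when the
measure is positive, iterating `g` `μ b` times reaches a zero of `μ`. -/
theorem iter_reach {B : Type*} (g : B → Option B) (μ : B → ℕ)
    (hs : ∀ b b', g b = some b' → μ b = μ b' + 1)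
    (hp : ∀ b, μ b ≠ 0 → g b ≠ none) :
    ∀ (n : ℕ) (b : B), μ b = n →
      ∃ c, optIter g n (some b) = some c ∧ μ c = 0 := by
  intro n
  induction n with
  | zero => intro b hb; exact ⟨b, rfl, hb⟩
  | succ n ih =>
    intro b hb
    obtain ⟨y, hy⟩ := Option.ne_none_iff_exists'.mp (hp b (by omega))
    have hμy : μ y = n := by have := hs b y hy; omega
    obtain ⟨c, hc, hc0⟩ := ih y hμy
    exact ⟨c, by rw [optIter_succ']; simpa [hy] using hc, hc0⟩

end Aux

section TensorAux

variable {I P : Type*} [AddCommGroup P] {α : I → P} {pair : I → P →+ ℤ}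
  {B1 B2 : Type*} (C1 : SNCrystal I P α pair B1) (C2 : SNCrystal I P α pair B2)

/-- `ε_i` for the tensor product. -/
def tEps (i : I) (b : B1 × B2) : ℕ :=
  C1.eps i b.1 + (C2.eps i b.2 - C1.phi i b.1)

/-- `φ_i` for the tensor product. -/
def tPhi (i : I) (b : B1 × B2) : ℕ :=
  C2.phi i b.2 + (C1.phi i b.1 - C2.eps i b.2)

theorem tensorE_none_of_zero {i : I} {b : B1 × B2} (h : tEps C1 C2 i b = 0) :
    tensorE C1 C2 i b = none := by
  unfold tEps at h
  have h2 : C2.eps i b.2 ≤ C1.phi i b.1 := by omega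
  have h1 : C1.eps i b.1 = 0 := by omega
  rw [tensorE, if_pos h2, C1.e_none_of_eps_zero h1]; rfl

theorem tensorE_ne_none_of_pos {i : I} {b : B1 × B2} (h : tEps C1 C2 i b ≠ 0) :
    tensorE C1 C2 i b ≠ none := by
  unfold tEps at h
  rw [tensorE]
  split_ifs with hc
  · have h1 : C1.eps i b.1 ≠ 0 := by omega
    obtain ⟨y, hy⟩ := Option.ne_none_iff_exists'.mp
      (fun hn => h1 (C1.eps_zero_of_e_none hn))
    simp [hy]
  · have h2 : C2.eps i b.2 ≠ 0 := by omega
    obtain ⟨y, hy⟩ := Option.ne_none_iff_exists'.mp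
      (fun hn => h2 (C2.eps_zero_of_e_none hn))
    simp [hy]

theorem tEps_step {i : I} {b b' : B1 × B2} (h : tensorE C1 C2 i b = some b') :
    tEps C1 C2 i b = tEps C1 C2 i b' + 1 := by
  rw [tensorE] at h
  split_ifs at h with hc
  · obtain ⟨x, hx, hb'⟩ := Option.map_eq_some_iff.mp h
    subst hb'
    have h1 := C1.eps_of_e hx
    have h2 := C1.phi_of_e hx
    simp only [tEps]
    omega
  · obtain ⟨x, hx, hb'⟩ := Option.map_eq_some_iff.mp h
    subst hb'
    have h1 := C2.eps_of_e hx
    simp only [tEps]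
    omega

theorem tensorF_none_of_zero {i : I} {b : B1 × B2} (h : tPhi C1 C2 i b = 0) :
    tensorF C1 C2 i b = none := by
  unfold tPhi at h
  have hc : ¬ C2.eps i b.2 < C1.phi i b.1 := by omega
  have h2 : C2.phi i b.2 = 0 := by omega
  rw [tensorF, if_neg hc, C2.f_none_of_phi_zero h2]; rfl

theorem tensorF_ne_none_of_pos {i : I} {b : B1 × B2} (h : tPhi C1 C2 i b ≠ 0) :
    tensorF C1 C2 i b ≠ none := by
  unfold tPhi at h
  rw [tensorF]
  split_ifs with hc
  · have h1 : C1.phi i b.1 ≠ 0 := by omega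
    obtain ⟨y, hy⟩ := Option.ne_none_iff_exists'.mp
      (fun hn => h1 (C1.phi_zero_of_f_none hn))
    simp [hy]
  · have h2 : C2.phi i b.2 ≠ 0 := by omega
    obtain ⟨y, hy⟩ := Option.ne_none_iff_exists'.mp
      (fun hn => h2 (C2.phi_zero_of_f_none hn))
    simp [hy]

theorem tPhi_step {i : I} {b b' : B1 × B2} (h : tensorF C1 C2 i b = some b') :
    tPhi C1 C2 i b = tPhi C1 C2 i b' + 1 := by
  rw [tensorF] at h
  split_ifs at h with hc
  · obtain ⟨x, hx, hb'⟩ := Option.map_eq_some_iff.mp h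
    subst hb'
    have h1 := C1.phi_of_f hx
    simp only [tPhi]
    omega
  · obtain ⟨x, hx, hb'⟩ := Option.map_eq_some_iff.mp h
    subst hb'
    have h1 := C2.phi_of_f hx
    have h2 := C2.eps_of_f hx
    simp only [tPhi]
    omega

theorem tensorE_reach (i : I) (b : B1 × B2) :
    ∃ c, optIter (tensorE C1 C2 i) (tEps C1 C2 i b) (some b) = some c ∧
      tEps C1 C2 i c = 0 :=
  iter_reach _ _ (fun _ _ h => tEps_step C1 C2 h)
    (fun _ h => tensorE_ne_none_of_pos C1 C2 h) _ b rfl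

theorem tensorF_reach (i : I) (b : B1 × B2) :
    ∃ c, optIter (tensorF C1 C2 i) (tPhi C1 C2 i b) (some b) = some c ∧
      tPhi C1 C2 i c = 0 :=
  iter_reach _ _ (fun _ _ h => tPhi_step C1 C2 h)
    (fun _ h => tensorF_ne_none_of_pos C1 C2 h) _ b rfl

end TensorAux

/-- the tensor product rule defines a seminormal crystal.
For seminormal crystals `B₁`, `B₂` there exists a seminormal crystal structure on
`B₁ × B₂` whose weight map is `wt(b₁ ⊗ b₂) = wt(b₁) + wt(b₂)` and whose crystal
operators are given by the signature rule; in particular all crystal axioms hold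
(weights change by `±α_i`, `ε_i` and `φ_i` are finite, `⟨α_i^∨, wt⟩ = φ_i − ε_i`,
and `e_i`, `f_i` are mutually inverse where nonzero). -/
theorem tensor_is_crystal {I P : Type*} [AddCommGroup P] {α : I → P} {pair : I → P →+ ℤ}
    {B1 B2 : Type*} (C1 : SNCrystal I P α pair B1) (C2 : SNCrystal I P α pair B2) :
    ∃ T : SNCrystal I P α pair (B1 × B2), IsTensor C1 C2 T := by
  refine ⟨{
    wt := fun b => C1.wt b.1 + C2.wt b.2
    e := tensorE C1 C2
    f := tensorF C1 C2
    eps := tEps C1 C2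
    phi := tPhi C1 C2
    wt_e := ?_
    wt_f := ?_
    eps_spec := ?_
    eps_max := ?_
    phi_spec := ?_
    phi_max := ?_
    pair_wt := ?_
    f_e := ?_
    e_f := ?_ }, fun _ => rfl, fun _ _ => rfl, fun _ _ => rfl⟩
  · -- wt_e
    intro i b b' h
    rw [tensorE] at h
    split_ifs at h with hc <;>
      obtain ⟨x, hx, rfl⟩ := Option.map_eq_some_iff.mp h
    · dsimp only; rw [C1.wt_e i _ _ hx]; abel
    · dsimp only; rw [C2.wt_e i _ _ hx]; abel
  · -- wt_f
    intro i b b' h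
    rw [tensorF] at h
    split_ifs at h with hc <;>
      obtain ⟨x, hx, rfl⟩ := Option.map_eq_some_iff.mp h
    · dsimp only; rw [C1.wt_f i _ _ hx]; abel
    · dsimp only; rw [C2.wt_f i _ _ hx]; abel
  · -- eps_spec
    intro i b
    obtain ⟨c, hc, _⟩ := tensorE_reach C1 C2 i b
    simp [hc]
  · -- eps_max
    intro i b
    obtain ⟨c, hc, hc0⟩ := tensorE_reach C1 C2 i b
    show (optIter _ _ _).bind _ = none
    rw [hc, Option.bind_some, tensorE_none_of_zero C1 C2 hc0]
  · -- phi_spec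
    intro i b
    obtain ⟨c, hc, _⟩ := tensorF_reach C1 C2 i b
    simp [hc]
  · -- phi_max
    intro i b
    obtain ⟨c, hc, hc0⟩ := tensorF_reach C1 C2 i b
    show (optIter _ _ _).bind _ = none
    rw [hc, Option.bind_some, tensorF_none_of_zero C1 C2 hc0]
  · -- pair_wt
    intro i b
    have h1 := C1.pair_wt i b.1
    have h2 := C2.pair_wt i b.2
    rw [map_add, h1, h2]
    simp only [tEps, tPhi]
    push_cast
    omega
  · -- f_e
    intro i b b' h
    rw [tensorE] at h
    rw [tensorF]
    split_ifs at h with hc <;>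
      obtain ⟨x, hx, rfl⟩ := Option.map_eq_some_iff.mp h
    · have hp := C1.phi_of_e hx
      rw [if_pos (by simp only []; omega : C2.eps i (x, b.2).2 < C1.phi i (x, b.2).1)]
      rw [show (x, b.2).1 = x from rfl, C1.f_e i _ _ hx]
      simp
    · push_neg at hc
      have he := C2.eps_of_e hx
      rw [if_neg (by simp only []; omega : ¬ C2.eps i (b.1, x).2 < C1.phi i (b.1, x).1)]
      rw [show (b.1, x).2 = x from rfl, C2.f_e i _ _ hx]
      simp
  · -- e_f
    intro i b b' h
    rw [tensorF] at h
    rw [tensorE]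
    split_ifs at h with hc <;>
      obtain ⟨x, hx, rfl⟩ := Option.map_eq_some_iff.mp h
    · have hp := C1.phi_of_f hx
      rw [if_pos (by simp only []; omega : C2.eps i (x, b.2).2 ≤ C1.phi i (x, b.2).1)]
      rw [show (x, b.2).1 = x from rfl, C1.e_f i _ _ hx]
      simp
    · push_neg at hc
      have he := C2.eps_of_f hx
      rw [if_neg (by simp only []; omega : ¬ C2.eps i (b.1, x).2 ≤ C1.phi i (b.1, x).1)]
      rw [show (b.1, x).2 = x from rfl, C2.e_f i _ _ hx]
      simp
end
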